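/- Define f : ℕ → ℕ on inputs x ≥ 2 by f(x) = 2^(Nat.clog 2 x) · x (so f(x) = 2^k · x for the unique k ≥ 1 with 2^(k−1) < x ≤ 2^k). Then for every x ≥ 3: x is a power of 2 if and only if f(x+1) − f(x) > f(x) − f(x−1). -/

import Mathlib

theorem power_of_two_iff_difference_increase (x : ℕ) (hx : 3 ≤ x)
    (f : ℕ → ℕ) (hf : ∀ n, f n = 2 ^ Nat.clog 2 n * n) :
    (∃ j : ℕ, x = 2 ^ j) ↔ f (x + 1) - f x > f x - f (x - 1) := by
  have h2 : (1:ℕ) < 2 := one_lt_two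
  constructor
  · rintro ⟨j, rfl⟩
    have hj : 2 ≤ j := by
      by_contra h
      interval_cases j <;> omega
    have hA : 4 ≤ 2 ^ j := by
      calc (4:ℕ) = 2 ^ 2 := rfl
        _ ≤ 2 ^ j := Nat.pow_le_pow_right (by norm_num) hj
    have hcx : Nat.clog 2 (2 ^ j) = j := Nat.clog_pow 2 j h2
    have hpow : 2 ^ (j + 1) = 2 * 2 ^ j := by rw [pow_succ]; ring
    have hcx1 : Nat.clog 2 (2 ^ j + 1) = j + 1 := by
      have h1 : Nat.clog 2 (2 ^ j + 1) ≤ j + 1 := by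
        rw [Nat.clog_le_iff_le_pow h2]
        omega
      have h2' : j < Nat.clog 2 (2 ^ j + 1) := by
        rw [Nat.lt_clog_iff_pow_lt h2]; omega
      omega
    have hcxm : Nat.clog 2 (2 ^ j - 1) = j := by
      have hp : 2 ^ (j - 1) * 2 = 2 ^ j := by
        rw [← pow_succ]; congr 1; omega
      have h1 : Nat.clog 2 (2 ^ j - 1) ≤ j := by
        rw [Nat.clog_le_iff_le_pow h2]; omega
      have h2' : j - 1 < Nat.clog 2 (2 ^ j - 1) := by
        rw [Nat.lt_clog_iff_pow_lt h2]; omega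
      omega
    rw [hf, hf, hf, hcx, hcx1, hcxm, hpow]
    have e2 : 2 ^ j * (2 ^ j - 1) = 2 ^ j * 2 ^ j - 2 ^ j := by
      rw [Nat.mul_sub, mul_one]
    have e1 : 2 * 2 ^ j * (2 ^ j + 1) = 2 * (2 ^ j * 2 ^ j) + 2 * 2 ^ j := by ring
    rw [e1, e2]
    have hBA : 2 ^ j ≤ 2 ^ j * 2 ^ j := Nat.le_mul_of_pos_left _ (by omega)
    omega
  · intro h
    by_contra hne
    push_neg at hne
    set k := Nat.clog 2 x with hk
    have hle : x ≤ 2 ^ k := Nat.le_pow_clog h2 x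
    have hlt : 2 ^ (k - 1) < x := Nat.pow_pred_clog_lt_self h2 (by omega)
    have hxne : x ≠ 2 ^ k := hne k
    have hk2 : 2 ≤ k := by
      have : (1:ℕ) < k := by
        rw [hk, Nat.lt_clog_iff_pow_lt h2]; omega
      omega
    have hpow : 2 ^ (k - 1) * 2 = 2 ^ k := by
      rw [← pow_succ]; congr 1; omega
    have hA2 : 2 ≤ 2 ^ (k - 1) := by
      calc (2:ℕ) = 2 ^ 1 := rfl
        _ ≤ 2 ^ (k - 1) := Nat.pow_le_pow_right (by norm_num) (by omega)
    have hcx1 : Nat.clog 2 (x + 1) = k := by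
      have h1 : Nat.clog 2 (x + 1) ≤ k := by
        rw [Nat.clog_le_iff_le_pow h2]; omega
      have h2' : k - 1 < Nat.clog 2 (x + 1) := by
        rw [Nat.lt_clog_iff_pow_lt h2]; omega
      omega
    rcases eq_or_lt_of_le (show 2 ^ (k - 1) + 1 ≤ x by omega) with heq | hgt
    · -- x = 2^(k-1) + 1
      have hxm : x - 1 = 2 ^ (k - 1) := by omega
      have hcxm : Nat.clog 2 (x - 1) = k - 1 := by
        rw [hxm, Nat.clog_pow 2 (k - 1) h2]
      rw [hf, hf, hf, hcx1, hcxm, hxm, ← hk] at h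
      have hx' : x = 2 ^ (k - 1) + 1 := heq.symm
      rw [hx'] at h
      have e1 : 2 ^ k * (2 ^ (k - 1) + 1 + 1)
          = 2 * (2 ^ (k - 1) * 2 ^ (k - 1)) + 2 * 2 ^ k := by
        rw [← hpow]; ring
      have e2 : 2 ^ k * (2 ^ (k - 1) + 1)
          = 2 * (2 ^ (k - 1) * 2 ^ (k - 1)) + 2 ^ k := by
        rw [← hpow]; ring
      rw [e1, e2] at h
      have hBA : 2 * 2 ^ (k - 1) ≤ 2 ^ (k - 1) * 2 ^ (k - 1) :=
        Nat.mul_le_mul_right _ hA2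
      omega
    · -- 2^(k-1) < x - 1
      have hcxm : Nat.clog 2 (x - 1) = k := by
        have h1 : Nat.clog 2 (x - 1) ≤ k := by
          rw [Nat.clog_le_iff_le_pow h2]; omega
        have h2' : k - 1 < Nat.clog 2 (x - 1) := by
          rw [Nat.lt_clog_iff_pow_lt h2]; omega
        omega
      rw [hf, hf, hf, hcx1, hcxm, ← hk] at h
      have e1 : 2 ^ k * (x + 1) = 2 ^ k * x + 2 ^ k := by ring
      have e2 : 2 ^ k * (x - 1) = 2 ^ k * x - 2 ^ k := by
        rw [Nat.mul_sub, mul_one]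
      rw [e1, e2] at h
      have hBA : 2 ^ k ≤ 2 ^ k * x := Nat.le_mul_of_pos_right _ (by omega)
      omega
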